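/- Let n ≥ 1 and B ≥ 2 be integers. The function E : Δ_n → ℝ is concave: for all x, y ∈ Δ_n and all t ∈ [0,1], E(t x + (1−t) y) ≥ t E(x) + (1−t) E(y). -/

import Mathlib

open Finset

/-- The extremal function
`E(x) = min{ Σ m(j) x(j) : m(j) ∈ ℕ, Σ sgn(x(j)) B^{-m(j)} ≤ 1 }`. -/
noncomputable def Efun (n B : ℕ) (x : Fin (n + 1) → ℝ) : ℝ :=
  sInf { s : ℝ | ∃ m : Fin (n + 1) → ℕ,
    (∑ j, Real.sign (x j) * ((B : ℝ) ^ (m j))⁻¹) ≤ 1 ∧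
    s = ∑ j, (m j : ℝ) * x j }

lemma sign_le_one' {a : ℝ} (ha : 0 ≤ a) : Real.sign a ≤ 1 := by
  rcases ha.eq_or_lt with h | h
  · rw [← h, Real.sign_zero]; norm_num
  · rw [Real.sign_of_pos h]

lemma sign_nonneg' {a : ℝ} (ha : 0 ≤ a) : 0 ≤ Real.sign a := by
  rcases ha.eq_or_lt with h | h
  · rw [← h, Real.sign_zero]
  · rw [Real.sign_of_pos h]; norm_num

lemma Efun_set_nonempty (n B : ℕ) (hB : 2 ≤ B) (x : Fin (n + 1) → ℝ)
    (hx : ∀ j, 0 ≤ x j) :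
    { s : ℝ | ∃ m : Fin (n + 1) → ℕ,
      (∑ j, Real.sign (x j) * ((B : ℝ) ^ (m j))⁻¹) ≤ 1 ∧
      s = ∑ j, (m j : ℝ) * x j }.Nonempty := by
  refine ⟨∑ j, ((n + 1 : ℕ) : ℝ) * x j, fun _ => n + 1, ?_, rfl⟩
  have hBpos : (0 : ℝ) < (B : ℝ) ^ (n + 1) := by positivity
  calc ∑ j : Fin (n+1), Real.sign (x j) * ((B : ℝ) ^ (n + 1))⁻¹
      ≤ ∑ _j : Fin (n+1), (1 : ℝ) * ((B : ℝ) ^ (n + 1))⁻¹ := by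
        apply Finset.sum_le_sum
        intro j _
        exact mul_le_mul_of_nonneg_right (sign_le_one' (hx j)) (by positivity)
    _ = (n + 1 : ℝ) * ((B : ℝ) ^ (n + 1))⁻¹ := by
        simp [Finset.sum_const, Finset.card_univ]
    _ ≤ 1 := by
        rw [mul_inv_le_iff₀ hBpos, one_mul]
        have h1 : ((n : ℝ) + 1) ≤ (2 : ℝ) ^ (n + 1) := by
          have := Nat.lt_two_pow_self (n := n + 1)
          have : ((n + 1 : ℕ) : ℝ) ≤ ((2 ^ (n + 1) : ℕ) : ℝ) := by exact_mod_cast this.le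
          simpa using this
        have h2 : (2 : ℝ) ^ (n + 1) ≤ (B : ℝ) ^ (n + 1) := by
          apply pow_le_pow_left₀ (by norm_num)
          exact_mod_cast hB
        linarith

lemma Efun_set_bddBelow (n B : ℕ) (x : Fin (n + 1) → ℝ) (hx : ∀ j, 0 ≤ x j) :
    BddBelow { s : ℝ | ∃ m : Fin (n + 1) → ℕ,
      (∑ j, Real.sign (x j) * ((B : ℝ) ^ (m j))⁻¹) ≤ 1 ∧
      s = ∑ j, (m j : ℝ) * x j } := by
  refine ⟨0, ?_⟩
  rintro s ⟨m, -, rfl⟩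
  apply Finset.sum_nonneg
  intro j _
  exact mul_nonneg (by positivity) (hx j)

theorem stmt7 (n B : ℕ) (hn : 1 ≤ n) (hB : 2 ≤ B) :
    ∀ x ∈ stdSimplex ℝ (Fin (n + 1)), ∀ y ∈ stdSimplex ℝ (Fin (n + 1)),
      ∀ t : ℝ, 0 ≤ t → t ≤ 1 →
        t * Efun n B x + (1 - t) * Efun n B y ≤ Efun n B (t • x + (1 - t) • y) := by
  intro x hx y hy t ht0 ht1
  set z : Fin (n + 1) → ℝ := t • x + (1 - t) • y with hz
  have hxnn : ∀ j, 0 ≤ x j := hx.1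
  have hynn : ∀ j, 0 ≤ y j := hy.1
  have hznn : ∀ j, 0 ≤ z j := fun j => by
    have : z j = t * x j + (1 - t) * y j := rfl
    rw [this]
    have := hxnn j; have := hynn j
    nlinarith
  apply le_csInf (Efun_set_nonempty n B hB z hznn)
  rintro s ⟨m, hm, rfl⟩
  -- sign comparison: feasible for z with t > 0 ⇒ feasible for x, etc.
  have key : ∀ (w : Fin (n + 1) → ℝ), (∀ j, 0 ≤ w j) →
      (∀ j, 0 < w j → 0 < z j) →
      (∑ j, Real.sign (w j) * ((B : ℝ) ^ (m j))⁻¹) ≤ 1 := by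
    intro w hw hwz
    refine le_trans (Finset.sum_le_sum ?_) hm
    intro j _
    apply mul_le_mul_of_nonneg_right _ (by positivity)
    rcases (hw j).eq_or_lt with h | h
    · rw [← h, Real.sign_zero]; exact sign_nonneg' (hznn j)
    · rw [Real.sign_of_pos h, Real.sign_of_pos (hwz j h)]
  have hsplit : ∑ j, (m j : ℝ) * z j
      = t * (∑ j, (m j : ℝ) * x j) + (1 - t) * (∑ j, (m j : ℝ) * y j) := by
    rw [Finset.mul_sum, Finset.mul_sum, ← Finset.sum_add_distrib]
    apply Finset.sum_congr rfl
    intro j _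
    show (m j : ℝ) * (t * x j + (1 - t) * y j) = _
    ring
  rw [hsplit]
  have hpart : ∀ (u : ℝ), 0 ≤ u → u ≤ 1 →
      ∀ (w : Fin (n + 1) → ℝ), (∀ j, 0 ≤ w j) →
      (∀ j, 0 < w j → 0 < u * w j + z j - u * w j) → True := fun _ _ _ _ _ _ => trivial
  have hxpart : t * Efun n B x ≤ t * ∑ j, (m j : ℝ) * x j := by
    rcases ht0.eq_or_lt with h | h
    · rw [← h]; simp
    · apply mul_le_mul_of_nonneg_left _ ht0
      apply csInf_le (Efun_set_bddBelow n B x hxnn)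
      refine ⟨m, key x hxnn ?_, rfl⟩
      intro j hj
      have : z j = t * x j + (1 - t) * y j := rfl
      rw [this]
      have := hynn j
      nlinarith
  have hypart : (1 - t) * Efun n B y ≤ (1 - t) * ∑ j, (m j : ℝ) * y j := by
    rcases (sub_nonneg.mpr ht1).eq_or_lt with h | h
    · rw [← h]; simp
    · apply mul_le_mul_of_nonneg_left _ (sub_nonneg.mpr ht1)
      apply csInf_le (Efun_set_bddBelow n B y hynn)
      refine ⟨m, key y hynn ?_, rfl⟩
      intro j hj
      have : z j = t * x j + (1 - t) * y j := rfl
      rw [this]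
      have := hxnn j
      nlinarith
  linarith
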